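/- Let A, B, C, X, Y ∈ ℂ^{n×n} satisfy A X + Y B = C and A Y^⋆ + X^⋆ B = C, where ⋆ denotes conjugate transpose. If the set σ(A^⋆ - λB) of eigenvalues of the pencil A^⋆ - λB is ⋆-reciprocal free (λᵢ λⱼ^⋆ ≠ 1 for all eigenvalues λᵢ, λⱼ, including that 0 and ∞ are not both eigenvalues), then A(X + Y^⋆) = (X + Y^⋆)^⋆ B implies X = -Y^⋆, i.e., the only matrix W with A W = W^⋆ B is W = 0. -/

import Mathlib

open Matrix

/-- The spectrum of the pencil `Aᴴ - λ B` (finite part), together with `∞` when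
`det B = 0`, is ⋆-reciprocal free: no two members `λᵢ, λⱼ` satisfy `λᵢ λⱼ^⋆ = 1`
(with `0` and `∞` counted as reciprocals of each other). -/
def StarReciprocalFree {n : ℕ} (A B : Matrix (Fin n) (Fin n) ℂ) : Prop :=
  (∀ μ ν : ℂ, (Aᴴ - μ • B).det = 0 → (Aᴴ - ν • B).det = 0 →
      μ * (starRingEnd ℂ ν) ≠ 1) ∧
  ¬((Aᴴ).det = 0 ∧ B.det = 0)

namespace StarSylvesterAux

open Polynomial

noncomputable def pencilPoly {m : ℕ} (A B : Matrix (Fin m) (Fin m) ℂ) : ℂ[X] :=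
  (Aᴴ.map C - (X : ℂ[X]) • B.map C).det

lemma pencilPoly_eval {m : ℕ} (A B : Matrix (Fin m) (Fin m) ℂ) (μ : ℂ) :
    (pencilPoly A B).eval μ = (Aᴴ - μ • B).det := by
  have := RingHom.map_det (evalRingHom μ) (Aᴴ.map C - (X : ℂ[X]) • B.map C)
  rw [pencilPoly, ← coe_evalRingHom, this]
  congr 1
  ext i j
  simp only [RingHom.mapMatrix_apply, Matrix.map_apply, Matrix.sub_apply, Matrix.smul_apply,
    coe_evalRingHom, eval_sub, eval_mul, eval_C, eval_X, eval_smul, smul_eq_mul, map_sub]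

lemma eval_charpoly' {m : ℕ} (M : Matrix (Fin m) (Fin m) ℂ) (μ : ℂ) :
    M.charpoly.eval μ = (μ • (1 : Matrix (Fin m) (Fin m) ℂ) - M).det := by
  have := RingHom.map_det (evalRingHom μ) (charmatrix M)
  rw [Matrix.charpoly, ← coe_evalRingHom, this]
  congr 1
  ext i j
  by_cases h : i = j <;>
    simp [charmatrix_apply, h, Matrix.one_apply, Matrix.sub_apply, Matrix.smul_apply,
      Matrix.diagonal_apply]

lemma intertwine {m : ℕ} (P Q Z : Matrix (Fin m) (Fin m) ℂ) (h : P * Z = Z * Q) (r : ℂ[X]) :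
    (aeval P r) * Z = Z * (aeval Q r) := by
  induction r using Polynomial.induction_on' with
  | add f g hf hg => simp [map_add, add_mul, mul_add, hf, hg]
  | monomial k c =>
    have hk : ∀ j : ℕ, P ^ j * Z = Z * Q ^ j := by
      intro j
      induction j with
      | zero => simp
      | succ j ih =>
        rw [pow_succ, pow_succ, mul_assoc, h, ← mul_assoc, ih, mul_assoc]
    rw [aeval_monomial, aeval_monomial, mul_assoc, hk k, ← mul_assoc,
      Algebra.commutes c Z, mul_assoc]

lemma core {m : ℕ} (A B : Matrix (Fin m) (Fin m) ℂ)
    (h1 : ∀ μ ν : ℂ, (Aᴴ - μ • B).det = 0 → (Aᴴ - ν • B).det = 0 →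
      μ * (starRingEnd ℂ ν) ≠ 1)
    (hB : IsUnit B.det) (hA : IsUnit (Aᴴ).det)
    (W : Matrix (Fin m) (Fin m) ℂ) (hW : A * W = Wᴴ * B) : W = 0 := by
  have hW2 : Bᴴ * W = Wᴴ * Aᴴ := by
    have := congrArg conjTranspose hW
    simpa [conjTranspose_mul] using this.symm
  set K : Matrix (Fin m) (Fin m) ℂ := Aᴴ * B⁻¹ with hK
  set Z : Matrix (Fin m) (Fin m) ℂ := W * B⁻¹ with hZ
  have hBB : B * B⁻¹ = 1 := mul_nonsing_inv B hB
  have hBB' : B⁻¹ * B = 1 := nonsing_inv_mul B hB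
  have hBH : IsUnit (Bᴴ).det := by rwa [det_conjTranspose, isUnit_star]
  have hBHB : (Bᴴ)⁻¹ * Bᴴ = 1 := nonsing_inv_mul _ hBH
  have hKH : Kᴴ = (Bᴴ)⁻¹ * A := by
    rw [hK, conjTranspose_mul, conjTranspose_nonsing_inv, conjTranspose_conjTranspose]
  have hstein : Kᴴ * Z * K = Z := by
    rw [hKH, hK, hZ]
    calc (Bᴴ)⁻¹ * A * (W * B⁻¹) * (Aᴴ * B⁻¹)
        = (Bᴴ)⁻¹ * ((A * W) * B⁻¹ * Aᴴ) * B⁻¹ := by noncomm_ring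
      _ = (Bᴴ)⁻¹ * ((Wᴴ * B) * B⁻¹ * Aᴴ) * B⁻¹ := by rw [hW]
      _ = (Bᴴ)⁻¹ * (Wᴴ * Aᴴ) * B⁻¹ := by rw [mul_assoc Wᴴ, hBB, mul_one]
      _ = (Bᴴ)⁻¹ * (Bᴴ * W) * B⁻¹ := by rw [hW2]
      _ = W * B⁻¹ := by rw [← mul_assoc, hBHB, one_mul]
  have hKdet : IsUnit K.det := by
    rw [hK, det_mul, det_nonsing_inv]
    exact hA.mul (isUnit_ringInverse.mpr hB)
  have hKK : K * K⁻¹ = 1 := mul_nonsing_inv K hKdet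
  have hKK' : K⁻¹ * K = 1 := nonsing_inv_mul K hKdet
  have hint : Kᴴ * Z = Z * K⁻¹ := by
    calc Kᴴ * Z = Kᴴ * Z * K * K⁻¹ := by rw [mul_assoc, hKK, mul_one]
      _ = Z * K⁻¹ := by rw [hstein]
  -- pencil connection
  have hpencil : ∀ μ : ℂ, (K - μ • 1).det = 0 → (Aᴴ - μ • B).det = 0 := by
    intro μ h
    have : Aᴴ - μ • B = (K - μ • 1) * B := by
      rw [hK, sub_mul, mul_assoc, hBB', mul_one, smul_mul_assoc, one_mul]
    rw [this, det_mul, h, zero_mul]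
  -- coprimality of the two characteristic polynomials
  have hcop : IsCoprime (Kᴴ).charpoly (K⁻¹).charpoly := by
    rw [Polynomial.isCoprime_iff_aeval_ne_zero_of_isAlgClosed (k := ℂ) ℂ]
    intro a
    by_contra hcon
    push_neg at hcon
    obtain ⟨hp0, hq0⟩ := hcon
    simp only [Polynomial.coe_aeval_eq_eval] at hp0 hq0
    rw [eval_charpoly'] at hp0 hq0
    have hKinvdet : IsUnit (K⁻¹).det := by
      rw [det_nonsing_inv]; exact isUnit_ringInverse.mpr hKdet
    have ha0 : a ≠ 0 := by
      rintro rfl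
      rw [zero_smul, zero_sub, det_neg] at hq0
      exact hKinvdet.ne_zero (by
        have := hq0
        rcases mul_eq_zero.mp this with h | h
        · exact absurd h (pow_ne_zero _ (neg_ne_zero.mpr one_ne_zero))
        · exact h)
    -- star a is an eigenvalue of K
    have hμ : (K - (starRingEnd ℂ a) • 1).det = 0 := by
      have : ((a • (1 : Matrix (Fin m) (Fin m) ℂ) - Kᴴ))ᴴ
          = (starRingEnd ℂ a) • 1 - K := by
        simp [conjTranspose_smul, conjTranspose_sub]
      have h' : ((starRingEnd ℂ a) • (1 : Matrix (Fin m) (Fin m) ℂ) - K).det = 0 := by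
        rw [← this, det_conjTranspose, hp0, star_zero]
      have : K - (starRingEnd ℂ a) • 1
          = (-1 : ℂ) • ((starRingEnd ℂ a) • (1 : Matrix (Fin m) (Fin m) ℂ) - K) := by
        simp
      rw [this, det_smul, h', mul_zero]
    -- a⁻¹ is an eigenvalue of K
    have hν : (K - a⁻¹ • 1).det = 0 := by
      have key : a • (1 : Matrix (Fin m) (Fin m) ℂ) - K⁻¹
          = K⁻¹ * ((a • (1 : Matrix (Fin m) (Fin m) ℂ)) * (K - a⁻¹ • 1)) := by
        rw [smul_mul_assoc, one_mul, mul_smul_comm, mul_sub, mul_smul_comm, hKK', mul_one]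
        rw [smul_sub, smul_smul, mul_inv_cancel₀ ha0, one_smul]
      rw [key, det_mul, det_mul, det_smul, det_one, mul_one] at hq0
      rcases mul_eq_zero.mp hq0 with h | h
      · exact absurd h hKinvdet.ne_zero
      · rcases mul_eq_zero.mp h with h' | h'
        · exact absurd h' (pow_ne_zero _ ha0)
        · exact h'
    have e1 := hpencil _ hμ
    have e2 := hpencil _ hν
    refine h1 _ _ e1 e2 ?_
    rw [map_inv₀]
    exact mul_inv_cancel₀ (star_ne_zero.mpr ha0)
  -- Bezout finale
  obtain ⟨u, v, huv⟩ := hcop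
  have hqCH : aeval K⁻¹ (K⁻¹).charpoly = 0 := Matrix.aeval_self_charpoly _
  have hpCH : aeval Kᴴ (Kᴴ).charpoly = 0 := Matrix.aeval_self_charpoly _
  have h2 : Z * aeval K⁻¹ ((Kᴴ).charpoly) = 0 := by
    rw [← intertwine _ _ _ hint, hpCH, zero_mul]
  have h3 : aeval K⁻¹ u * aeval K⁻¹ (Kᴴ).charpoly = 1 := by
    have := congrArg (aeval K⁻¹) huv
    simpa [map_add, _root_.map_mul, hqCH] using this
  have h4 : aeval K⁻¹ (Kᴴ).charpoly * aeval K⁻¹ u = 1 := by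
    rw [← _root_.map_mul, mul_comm ((Kᴴ).charpoly), _root_.map_mul, h3]
  have hZ0 : Z = 0 := by
    calc Z = Z * (aeval K⁻¹ (Kᴴ).charpoly * aeval K⁻¹ u) := by rw [h4, mul_one]
      _ = 0 := by rw [← mul_assoc, h2, zero_mul]
  have hWZ : W = Z * B := by rw [hZ, mul_assoc, hBB', mul_one]
  rw [hWZ, hZ0, zero_mul]

private theorem starSylvester_homogeneous_unique_aux
    (n : ℕ) (A B : Matrix (Fin n) (Fin n) ℂ)
    (h1 : ∀ μ ν : ℂ, (Aᴴ - μ • B).det = 0 → (Aᴴ - ν • B).det = 0 →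
      μ * (starRingEnd ℂ ν) ≠ 1)
    (h2 : ¬((Aᴴ).det = 0 ∧ B.det = 0)) :
    ∀ W : Matrix (Fin n) (Fin n) ℂ, A * W = Wᴴ * B → W = 0 := by
  intro W hW
  have hW2 : Bᴴ * W = Wᴴ * Aᴴ := by
    have := congrArg conjTranspose hW
    simpa [conjTranspose_mul] using this.symm
  set q1 : Polynomial ℂ := pencilPoly A B with hq1def
  -- the pencil polynomial is not identically zero
  have hq1 : q1 ≠ 0 := by
    by_cases hA : (Aᴴ).det = 0
    · have hBdet : B.det ≠ 0 := fun h => h2 ⟨hA, h⟩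
      have hBu : IsUnit B.det := isUnit_iff_ne_zero.mpr hBdet
      have hchar : (Aᴴ * B⁻¹).charpoly ≠ 0 := (Matrix.charpoly_monic _).ne_zero
      obtain ⟨lam, hlam⟩ : ∃ lam : ℂ, ¬ (Aᴴ * B⁻¹).charpoly.IsRoot lam := by
        have hfin : {x : ℂ | (Aᴴ * B⁻¹).charpoly.IsRoot x}.Finite :=
          (Polynomial.finite_setOf_isRoot hchar)
        obtain ⟨x, hx⟩ := hfin.infinite_compl.nonempty
        exact ⟨x, hx⟩
      intro h0
      apply hlam
      have hdet : (Aᴴ - lam • B).det = 0 := by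
        rw [← pencilPoly_eval, ← hq1def, h0, Polynomial.eval_zero]
      have hfac : Aᴴ - lam • B = (Aᴴ * B⁻¹ - lam • 1) * B := by
        rw [sub_mul, mul_assoc, nonsing_inv_mul B hBu, mul_one, smul_mul_assoc, one_mul]
      rw [hfac, det_mul] at hdet
      have hd0 : (Aᴴ * B⁻¹ - lam • 1).det = 0 := by
        rcases mul_eq_zero.mp hdet with h | h
        · exact h
        · exact absurd h hBdet
      have : (lam • (1 : Matrix (Fin n) (Fin n) ℂ) - Aᴴ * B⁻¹)
          = (-1 : ℂ) • (Aᴴ * B⁻¹ - lam • 1) := by simp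
      rw [Polynomial.IsRoot, eval_charpoly', this, det_smul, hd0, mul_zero]
    · intro h0
      apply hA
      have := pencilPoly_eval A B 0
      rw [← hq1def, h0, Polynomial.eval_zero, zero_smul, sub_zero] at this
      exact this.symm
  -- choose a good real shift s
  have hbadfin : ((Neg.neg '' {x : ℂ | q1.IsRoot x}) ∪
      (Inv.inv '' (Neg.neg '' {x : ℂ | q1.IsRoot x}))).Finite := by
    have h := Polynomial.finite_setOf_isRoot hq1
    exact (h.image _).union ((h.image _).image _)
  have hgoodinf : ((fun x : ℝ => (x : ℂ)) '' (Set.Ioo (0:ℝ) 1)).Infinite := by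
    have hinj : Set.InjOn (fun x : ℝ => (x : ℂ)) (Set.Ioo (0:ℝ) 1) :=
      fun a _ b _ h => by simpa using Complex.ofReal_inj.mp (by simpa using h)
    exact (Set.Ioo_infinite (by norm_num : (0:ℝ) < 1)).image hinj
  obtain ⟨z, hzgood, hzbad⟩ := ((hgoodinf.diff hbadfin).nonempty)
  obtain ⟨x, hx, rfl⟩ := hzgood
  rw [Set.mem_union, not_or] at hzbad
  obtain ⟨hzbad1, hzbad2⟩ := hzbad
  set z : ℂ := (x : ℂ) with hzdef
  have hz_re : (starRingEnd ℂ) z = z := Complex.conj_ofReal x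
  have hz0 : z ≠ 0 := by
    simp only [hzdef, ne_eq, Complex.ofReal_eq_zero]
    exact ne_of_gt hx.1
  have hz2 : z * z ≠ 1 := by
    simp only [hzdef]
    rw [← Complex.ofReal_mul, ← Complex.ofReal_one, Ne, Complex.ofReal_inj]
    nlinarith [hx.1, hx.2]
  have hgA : q1.eval (-z) ≠ 0 := by
    intro h
    exact hzbad1 ⟨-z, h, by simp [hzdef]⟩
  have hgB : q1.eval (-z⁻¹) ≠ 0 := by
    intro h
    exact hzbad2 ⟨z⁻¹, ⟨-z⁻¹, h, by simp⟩, by simp [hzdef]⟩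
  set A' := A + z • Bᴴ with hA'def
  set B' := B + z • Aᴴ with hB'def
  have hW' : A' * W = Wᴴ * B' := by
    rw [hA'def, hB'def, add_mul, smul_mul_assoc, hW, hW2, mul_add, mul_smul_comm]
  have hA'H : A'ᴴ = Aᴴ + z • B := by
    rw [hA'def, conjTranspose_add, conjTranspose_smul, conjTranspose_conjTranspose, Complex.star_def, hz_re]
  have hA'u : IsUnit ((A')ᴴ).det := by
    rw [hA'H]
    have heq : Aᴴ + z • B = Aᴴ - (-z) • B := by rw [neg_smul, sub_neg_eq_add]
    rw [heq, ← pencilPoly_eval, ← hq1def]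
    exact isUnit_iff_ne_zero.mpr hgA
  have hB'u : IsUnit B'.det := by
    have hfac : B' = z • (Aᴴ - (-z⁻¹) • B) := by
      rw [hB'def]
      ext i j
      simp only [Matrix.add_apply, Matrix.smul_apply, Matrix.sub_apply, smul_eq_mul]
      field_simp
      ring
    rw [hfac, det_smul, ← pencilPoly_eval, ← hq1def]
    exact isUnit_iff_ne_zero.mpr (mul_ne_zero (pow_ne_zero _ hz0) hgB)
  have hform : ∀ μ : ℂ, (A')ᴴ - μ • B' = (1 - μ*z) • Aᴴ + (z - μ) • B := by
    intro μ
    rw [hA'H, hB'def]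
    ext i j
    simp only [Matrix.add_apply, Matrix.sub_apply, Matrix.smul_apply, smul_eq_mul]
    ring
  have h1mz : (1 : ℂ) - z*z ≠ 0 := sub_ne_zero.mpr (Ne.symm hz2)
  have hdet : ∀ μ : ℂ, 1 - μ*z ≠ 0 →
      ((A')ᴴ - μ • B').det = (1 - μ*z)^n * q1.eval ((μ - z)/(1 - μ*z)) := by
    intro μ hμ
    have heq : (A')ᴴ - μ • B' = (1 - μ*z) • (Aᴴ - ((μ - z)/(1 - μ*z)) • B) := by
      rw [hform μ]
      ext i j
      simp only [Matrix.add_apply, Matrix.sub_apply, Matrix.smul_apply, smul_eq_mul]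
      field_simp
      ring
    rw [heq, det_smul, hq1def, pencilPoly_eval, Fintype.card_fin]
  have hzdetA : ((A')ᴴ - z • B').det = (1 - z*z)^n * (Aᴴ).det := by
    rw [hdet z h1mz]
    congr 1
    rw [sub_self, zero_div, hq1def, pencilPoly_eval, zero_smul, sub_zero]
  have h1' : ∀ μ ν : ℂ, ((A')ᴴ - μ • B').det = 0 → ((A')ᴴ - ν • B').det = 0 →
      μ * (starRingEnd ℂ ν) ≠ 1 := by
    intro μ ν dμ dν hcon
    by_cases hμz : 1 - μ*z = 0
    · -- μ = z⁻¹ ; forces det B = 0 and ν = z, contradiction with dν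
      have hμ : μ = z⁻¹ := by field_simp [hz0]; linear_combination -hμz
      have hdB : B.det = 0 := by
        have heq : (A')ᴴ - μ • B' = (z - μ) • B := by
          rw [hform μ, hμz, zero_smul, zero_add]
        rw [heq, det_smul] at dμ
        have hzμ : z - μ ≠ 0 := by
          rw [hμ]
          intro h
          have hzz := sub_eq_zero.mp h
          apply hz2
          nth_rewrite 2 [hzz]
          exact mul_inv_cancel₀ hz0
        rcases mul_eq_zero.mp dμ with h | h
        · exact absurd h (pow_ne_zero _ hzμ)
        · exact h
      have hdA : (Aᴴ).det ≠ 0 := fun h => h2 ⟨h, hdB⟩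
      have hν : ν = z := by
        rw [hμ] at hcon
        have hc : (starRingEnd ℂ) ν = z := by
          field_simp [hz0] at hcon
          linear_combination hcon
        have := congrArg (starRingEnd ℂ) hc
        simpa [hz_re] using this
      rw [hν, hzdetA] at dν
      rcases mul_eq_zero.mp dν with h | h
      · exact absurd h (pow_ne_zero _ h1mz)
      · exact hdA h
    · by_cases hνz : 1 - ν*z = 0
      · have hν : ν = z⁻¹ := by field_simp [hz0]; linear_combination -hνz
        have hdB : B.det = 0 := by
          have heq : (A')ᴴ - ν • B' = (z - ν) • B := by
            rw [hform ν, hνz, zero_smul, zero_add]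
          rw [heq, det_smul] at dν
          have hzν : z - ν ≠ 0 := by
            rw [hν]
            intro h
            have hzz := sub_eq_zero.mp h
            apply hz2
            nth_rewrite 2 [hzz]
            exact mul_inv_cancel₀ hz0
          rcases mul_eq_zero.mp dν with h | h
          · exact absurd h (pow_ne_zero _ hzν)
          · exact h
        have hdA : (Aᴴ).det ≠ 0 := fun h => h2 ⟨h, hdB⟩
        have hμeq : μ = z := by
          rw [hν] at hcon
          rw [map_inv₀, hz_re] at hcon
          field_simp [hz0] at hcon
          linear_combination hcon
        rw [hμeq, hzdetA] at dμ
        rcases mul_eq_zero.mp dμ with h | h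
        · exact absurd h (pow_ne_zero _ h1mz)
        · exact hdA h
      · set cμ := (μ - z)/(1 - μ*z) with hcμ
        set cν := (ν - z)/(1 - ν*z) with hcν
        have rμ : q1.eval cμ = 0 := by
          rw [hdet μ hμz] at dμ
          rcases mul_eq_zero.mp dμ with h | h
          · exact absurd h (pow_ne_zero _ hμz)
          · exact h
        have rν : q1.eval cν = 0 := by
          rw [hdet ν hνz] at dν
          rcases mul_eq_zero.mp dν with h | h
          · exact absurd h (pow_ne_zero _ hνz)
          · exact h
        have eμ : (Aᴴ - cμ • B).det = 0 := by
          rw [← pencilPoly_eval, ← hq1def]; exact rμ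
        have eν : (Aᴴ - cν • B).det = 0 := by
          rw [← pencilPoly_eval, ← hq1def]; exact rν
        refine h1 cμ cν eμ eν ?_
        have hνzc : (1 : ℂ) - (starRingEnd ℂ) ν * z ≠ 0 := by
          intro h
          apply hνz
          have := congrArg (starRingEnd ℂ) h
          simpa [map_sub, _root_.map_mul, hz_re] using this
        have hconj : (starRingEnd ℂ) cν
            = ((starRingEnd ℂ) ν - z)/(1 - (starRingEnd ℂ) ν * z) := by
          simp [hcν, map_div₀, map_sub, _root_.map_mul, _root_.map_one, hz_re]
        rw [hcμ, hconj, div_mul_div_comm, div_eq_one_iff_eq (mul_ne_zero hμz hνzc)]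
        linear_combination (1 - z*z) * hcon
  exact core A' B' h1' hB'u hA'u W hW'

end StarSylvesterAux

/-- If `σ(Aᴴ - λB)` is ⋆-reciprocal free, then the only matrix `W`
with `A W = Wᴴ B` is `W = 0`; in particular `A X + Y B = C` and `A Yᴴ + Xᴴ B = C`
force `X = -Yᴴ` whenever `A(X + Yᴴ) = (X + Yᴴ)ᴴ B`. -/
theorem starSylvester_homogeneous_unique
    (n : ℕ) (A B : Matrix (Fin n) (Fin n) ℂ)
    (hrf : StarReciprocalFree A B) :
    ∀ W : Matrix (Fin n) (Fin n) ℂ, A * W = Wᴴ * B → W = 0 := by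
  obtain ⟨h1, h2⟩ := hrf
  exact StarSylvesterAux.starSylvester_homogeneous_unique_aux n A B h1 h2
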